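/- For every n ≥ 3, d ≥ 2, and every time t ≥ 0, the worst-case total variation distance of the RWBD chain to stationarity is attained at state 0: max_{x ∈ {0,…,d}} ‖P*^t(x,·) − π*‖_TV = ‖P*^t(0,·) − π*‖_TV. -/

import Mathlib

open Finset Function

noncomputable section

/-- Total variation distance between two distributions on a finite set. -/
def tv {S : Type*} [Fintype S] (μ ν : S → ℝ) : ℝ :=
  (∑ s, |μ s - ν s|) / 2

/-- The transition matrix of the Rook's Walk Birth-Death (RWBD) chain on `{0,…,d}`. -/
def BD.P (n d : ℕ) : Matrix (Fin (d + 1)) (Fin (d + 1)) ℝ :=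
  Matrix.of fun x y =>
    if (y : ℕ) + 1 = (x : ℕ) then (x : ℝ) / ((d : ℝ) * ((n : ℝ) - 1))
    else if (y : ℕ) = (x : ℕ) then (x : ℝ) * ((n : ℝ) - 2) / ((d : ℝ) * ((n : ℝ) - 1))
    else if (y : ℕ) = (x : ℕ) + 1 then ((d : ℝ) - (x : ℝ)) / (d : ℝ)
    else 0

/-- The stationary distribution of the RWBD chain: `π*(x) = C(d,x)(n-1)^x n^{-d}`. -/
def BD.pi (n d : ℕ) : Fin (d + 1) → ℝ :=
  fun x => (d.choose (x : ℕ) : ℝ) * ((n : ℝ) - 1) ^ (x : ℕ) / (n : ℝ) ^ d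

/-- Worst-case total variation distance to stationarity of the RWBD chain at time `t`. -/
def BD.dist (n d : ℕ) (t : ℕ) : ℝ :=
  ⨆ x : Fin (d + 1), tv ((BD.P n d ^ t) x) (BD.pi n d)

/-- The mixing time of the RWBD chain. -/
def BD.tmix (n d : ℕ) (ε : ℝ) : ℕ := sInf {t : ℕ | BD.dist n d t ≤ ε}

namespace RWBD

variable (n d : ℕ)

/-- The state space of the full rook's walk. -/
abbrev V (n d : ℕ) := Fin d → Fin n

/-- Transition matrix of the full rook's walk on `(Fin d → Fin n)`. -/
def Q : Matrix (V n d) (V n d) ℝ :=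
  fun u u' => if hammingDist u u' = 1 then 1 / ((d : ℝ) * ((n : ℝ) - 1)) else 0

lemma Q_symm (u u' : V n d) : Q n d u u' = Q n d u' u := by
  simp [Q, hammingDist_comm u u']

/-- Distance to `w`, as an element of `Fin (d+1)`. -/
def fwd (w u : V n d) : Fin (d + 1) :=
  ⟨hammingDist u w, Nat.lt_succ_of_le (le_trans hammingDist_le_card_fintype (by simp))⟩

@[simp] lemma fwd_val (w u : V n d) : (fwd n d w u : ℕ) = hammingDist u w := rfl

/-- Sphere of radius `z` around `w`. -/
def sphere (w : V n d) (z : Fin (d + 1)) : Finset (V n d) :=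
  univ.filter fun u => fwd n d w u = z

lemma mem_sphere {w u : V n d} {z : Fin (d+1)} :
    u ∈ sphere n d w z ↔ hammingDist u w = (z : ℕ) := by
  simp [sphere, fwd, Fin.ext_iff]

/-- Real sphere size. -/
def Nr (z : Fin (d + 1)) : ℝ := (d.choose (z : ℕ) * (n - 1) ^ (z : ℕ) : ℕ)

lemma card_sphere (w : V n d) (z : Fin (d + 1)) :
    (sphere n d w z).card = d.choose (z : ℕ) * (n - 1) ^ (z : ℕ) := by
  classical
  set D : V n d → Finset (Fin d) := fun u => univ.filter fun i => u i ≠ w i with hD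
  have hdist : ∀ u : V n d, hammingDist u w = (D u).card := fun u => rfl
  have hmaps : ∀ u ∈ sphere n d w z, D u ∈ powersetCard (z : ℕ) univ := by
    intro u hu
    rw [mem_powersetCard]
    exact ⟨subset_univ _, by rw [← hdist, (mem_sphere n d).mp hu]⟩
  rw [Finset.card_eq_sum_card_fiberwise hmaps]
  have hfiber : ∀ s ∈ powersetCard (z : ℕ) univ,
      ((sphere n d w z).filter fun u => D u = s).card = (n - 1) ^ (z : ℕ) := by
    intro s hs
    rw [mem_powersetCard] at hs
    have hset : ((sphere n d w z).filter fun u => D u = s)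
        = Fintype.piFinset fun i => if i ∈ s then univ.erase (w i) else {w i} := by
      ext u
      simp only [mem_filter, Fintype.mem_piFinset, mem_sphere]
      constructor
      · rintro ⟨_, hDu⟩ i
        by_cases hi : i ∈ s
        · simp only [hi, if_true, mem_erase, mem_univ, and_true]
          rw [← hDu] at hi
          simpa [hD] using hi
        · simp only [hi, if_false, mem_singleton]
          rw [← hDu] at hi
          simpa [hD] using hi
      · intro h
        have hDs : D u = s := by
          ext i
          simp only [hD, mem_filter, mem_univ, true_and]
          constructor
          · intro hne
            by_contra hi
            have := h i
            simp only [hi, if_false, mem_singleton] at this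
            exact hne this
          · intro hi
            have := h i
            simp only [hi, if_true, mem_erase] at this
            exact this.1
        refine ⟨?_, hDs⟩
        rw [hdist, hDs, hs.2]
    rw [hset, Fintype.card_piFinset]
    have : ∀ i : Fin d, ((if i ∈ s then univ.erase (w i) else {w i}).card)
        = if i ∈ s then n - 1 else 1 := by
      intro i
      by_cases hi : i ∈ s <;>
        simp [hi, Finset.card_erase_of_mem, Fintype.card_fin]
    rw [Finset.prod_congr rfl fun i _ => this i]
    rw [Finset.prod_ite_mem univ s fun _ => n - 1]
    simp [Finset.univ_inter, Finset.prod_const, hs.2]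
  rw [Finset.sum_congr rfl hfiber, Finset.sum_const, Finset.card_powersetCard, card_univ,
    Fintype.card_fin, smul_eq_mul]

lemma hammingDist_update (u w : V n d) (i : Fin d) (a : Fin n) :
    hammingDist (update u i a) w + (if u i = w i then 0 else 1)
      = hammingDist u w + (if a = w i then 0 else 1) := by
  classical
  have hcard : ∀ f : V n d, hammingDist f w = ∑ j, if f j ≠ w j then 1 else 0 := by
    intro f
    rw [hammingDist, Finset.card_filter]
  have hfun : (fun j => if update u i a j ≠ w j then (1:ℕ) else 0)
      = update (fun j => if u j ≠ w j then 1 else 0) i (if a ≠ w i then 1 else 0) := by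
    funext j
    by_cases hj : j = i
    · subst hj; simp
    · simp [update_of_ne hj]
  have h1 : hammingDist (update u i a) w
      = (if a ≠ w i then 1 else 0) + ∑ j ∈ univ \ {i}, (if u j ≠ w j then (1:ℕ) else 0) := by
    rw [hcard]
    rw [show (∑ j, if update u i a j ≠ w j then (1:ℕ) else 0)
        = ∑ j, update (fun j => if u j ≠ w j then (1:ℕ) else 0) i (if a ≠ w i then 1 else 0) j
      from by rw [hfun]]
    exact Finset.sum_update_of_mem (mem_univ i) _ _
  have h2 : hammingDist u w
      = (if u i ≠ w i then 1 else 0) + ∑ j ∈ univ \ {i}, (if u j ≠ w j then (1:ℕ) else 0) := by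
    rw [hcard]
    exact Finset.sum_eq_add_sum_sdiff_singleton_of_mem (mem_univ i) _
  rw [h1, h2]
  by_cases h3 : u i = w i <;> by_cases h4 : a = w i <;> simp [h3, h4] <;> ring

lemma inner_count (u w : V n d) (i : Fin d) (z : ℕ) :
    (univ.filter fun a : Fin n =>
        a ≠ u i ∧ hammingDist (update u i a) w = z).card =
      if u i = w i then (if z = hammingDist u w + 1 then n - 1 else 0)
      else (if z + 1 = hammingDist u w then 1
            else if z = hammingDist u w then n - 2 else 0) := by
  classical
  set x := hammingDist u w with hx
  by_cases h : u i = w i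
  · -- u i = w i : any a ≠ u i moves distance to x + 1
    rw [if_pos h]
    have key : ∀ a : Fin n, a ≠ u i → hammingDist (update u i a) w = x + 1 := by
      intro a ha
      have := hammingDist_update n d u w i a
      rw [if_pos h] at this
      rw [if_neg (by rw [← h]; exact ha)] at this
      omega
    by_cases hz : z = x + 1
    · rw [if_pos hz]
      have hset : (univ.filter fun a : Fin n =>
          a ≠ u i ∧ hammingDist (update u i a) w = z) = univ.erase (u i) := by
        ext a
        simp only [mem_filter, mem_univ, true_and, mem_erase, and_true]
        constructor
        · exact fun h' => h'.1
        · exact fun ha => ⟨ha, by rw [key a ha, hz]⟩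
      rw [hset, card_erase_of_mem (mem_univ _), card_univ, Fintype.card_fin]
    · rw [if_neg hz]
      have hset : (univ.filter fun a : Fin n =>
          a ≠ u i ∧ hammingDist (update u i a) w = z) = ∅ := by
        ext a
        simp only [mem_filter, mem_univ, true_and, notMem_empty, iff_false, not_and]
        intro ha hdz
        exact hz (by rw [← hdz, key a ha])
      rw [hset, card_empty]
  · -- u i ≠ w i
    rw [if_neg h]
    have key : ∀ a : Fin n, hammingDist (update u i a) w + 1
        = x + (if a = w i then 0 else 1) := by
      intro a
      have := hammingDist_update n d u w i a
      rw [if_neg h] at this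
      omega
    by_cases hz1 : z + 1 = x
    · rw [if_pos hz1]
      have hset : (univ.filter fun a : Fin n =>
          a ≠ u i ∧ hammingDist (update u i a) w = z) = {w i} := by
        ext a
        simp only [mem_filter, mem_univ, true_and, mem_singleton]
        constructor
        · rintro ⟨ha, hdz⟩
          by_contra haw
          have := key a
          rw [if_neg haw, hdz] at this
          omega
        · rintro rfl
          refine ⟨fun hc => h hc.symm, ?_⟩
          have := key (w i)
          rw [if_pos rfl] at this
          omega
      rw [hset, card_singleton]
    · rw [if_neg hz1]
      by_cases hz2 : z = x
      · rw [if_pos hz2]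
        have hset : (univ.filter fun a : Fin n =>
            a ≠ u i ∧ hammingDist (update u i a) w = z)
            = (univ.erase (u i)).erase (w i) := by
          ext a
          simp only [mem_filter, mem_univ, true_and, mem_erase]
          constructor
          · rintro ⟨ha, hdz⟩
            refine ⟨?_, ha, trivial⟩
            intro haw
            have := key a
            rw [if_pos haw, hdz] at this
            omega
          · rintro ⟨haw, ha, -⟩
            refine ⟨ha, ?_⟩
            have := key a
            rw [if_neg haw] at this
            omega
        rw [hset, card_erase_of_mem (mem_erase.mpr ⟨fun hc => h hc.symm, mem_univ _⟩),
          card_erase_of_mem (mem_univ _), card_univ, Fintype.card_fin]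
        omega
      · rw [if_neg hz2]
        have hset : (univ.filter fun a : Fin n =>
            a ≠ u i ∧ hammingDist (update u i a) w = z) = ∅ := by
          ext a
          simp only [mem_filter, mem_univ, true_and, notMem_empty, iff_false, not_and]
          intro ha hdz
          have := key a
          rw [hdz] at this
          by_cases haw : a = w i
          · rw [if_pos haw] at this; omega
          · rw [if_neg haw] at this; omega
        rw [hset, card_empty]

lemma count_neighbors (u w : V n d) (z : ℕ) :
    (univ.filter fun u' : V n d =>
        hammingDist u u' = 1 ∧ hammingDist u' w = z).card =
      (if z + 1 = hammingDist u w then hammingDist u w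
       else if z = hammingDist u w then hammingDist u w * (n - 2)
       else if z = hammingDist u w + 1 then (d - hammingDist u w) * (n - 1)
       else 0) := by
  classical
  set x := hammingDist u w with hx
  have hone : ∀ (i : Fin d) (a : Fin n), a ≠ u i → hammingDist u (update u i a) = 1 := by
    intro i a ha
    have : (univ.filter fun j => u j ≠ update u i a j) = {i} := by
      ext j
      simp only [mem_filter, mem_univ, true_and, mem_singleton]
      constructor
      · intro hj
        by_contra hji
        rw [update_of_ne hji] at hj
        exact hj rfl
      · rintro rfl
        rw [update_self]
        exact fun hc => ha hc.symm
    rw [hammingDist]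
    rw [show ({j | u j ≠ update u i a j} : Finset (Fin d))
      = univ.filter (fun j => u j ≠ update u i a j) from rfl, this, card_singleton]
  have hbij : (univ.sigma fun i : Fin d => univ.filter fun a : Fin n =>
        a ≠ u i ∧ hammingDist (update u i a) w = z).card
      = (univ.filter fun u' : V n d =>
          hammingDist u u' = 1 ∧ hammingDist u' w = z).card := by
    apply Finset.card_bij (fun p _ => update u p.1 p.2)
    · rintro ⟨i, a⟩ hp
      simp only [mem_sigma, mem_filter, mem_univ, true_and] at hp
      simp only [mem_filter, mem_univ, true_and]
      exact ⟨hone i a hp.1, hp.2⟩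
    · rintro ⟨i, a⟩ hp ⟨j, b⟩ hq heq
      simp only [mem_sigma, mem_filter, mem_univ, true_and] at hp hq
      by_cases hij : i = j
      · subst hij
        have : a = b := by
          have := congrFun heq i
          rwa [update_self, update_self] at this
        subst this; rfl
      · exfalso
        have h1 := congrFun heq j
        rw [update_of_ne (fun hc => hij hc.symm), update_self] at h1
        exact hq.1 h1.symm
    · intro u' hu'
      simp only [mem_filter, mem_univ, true_and] at hu'
      have h1 : (univ.filter fun j => u j ≠ u' j).card = 1 := hu'.1
      obtain ⟨i, hi⟩ := Finset.card_eq_one.mp h1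
      have hiu : u i ≠ u' i := by
        have : i ∈ univ.filter fun j => u j ≠ u' j := hi ▸ mem_singleton_self i
        exact (mem_filter.mp this).2
      have hupd : update u i (u' i) = u' := by
        funext j
        by_cases hj : j = i
        · subst hj; rw [update_self]
        · rw [update_of_ne hj]
          by_contra hc
          have : j ∈ univ.filter fun j => u j ≠ u' j := mem_filter.mpr ⟨mem_univ _, hc⟩
          rw [hi, mem_singleton] at this
          exact hj this
      refine ⟨⟨i, u' i⟩, ?_, hupd⟩
      simp only [mem_sigma, mem_filter, mem_univ, true_and]
      exact ⟨fun hc => hiu hc.symm, by rw [hupd]; exact hu'.2⟩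
  rw [← hbij, Finset.card_sigma]
  rw [Finset.sum_congr rfl fun i _ => inner_count n d u w i z]
  rw [Finset.sum_ite, Finset.sum_const, Finset.sum_const]
  have hcx : (univ.filter fun i => ¬ u i = w i).card = x := rfl
  have hcd : (univ.filter fun i => u i = w i).card = d - x := by
    have := Finset.card_filter_add_card_filter_not (s := univ)
      (p := fun i : Fin d => u i = w i)
    rw [card_univ, Fintype.card_fin] at this
    have hxd : x ≤ d := by
      rw [hx]
      exact le_trans hammingDist_le_card_fintype (by simp)
    omega
  rw [hcx, hcd, smul_eq_mul, smul_eq_mul]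
  simp only [← hx]
  by_cases h1 : z + 1 = x
  · have h2 : ¬ z = x := by omega
    have h3 : ¬ z = x + 1 := by omega
    simp [h1, h2, h3]
  · by_cases h2 : z = x
    · have h3 : ¬ z = x + 1 := by omega
      simp [h1, h2, h3]
    · by_cases h3 : z = x + 1
      · simp [h1, h2, h3, show ¬ (x + 1 + 1 = x) from by omega]
      · simp [h1, h2, h3]

lemma step (hn : 3 ≤ n) (u w : V n d) (z : Fin (d + 1)) :
    ∑ u' ∈ sphere n d w z, Q n d u u' = BD.P n d (fwd n d w u) z := by
  classical
  set x := hammingDist u w with hx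
  have hxd : x ≤ d := le_trans hammingDist_le_card_fintype (by simp)
  have hzd : (z : ℕ) ≤ d := by omega
  have hsum : ∑ u' ∈ sphere n d w z, Q n d u u'
      = ((univ.filter fun u' : V n d =>
          hammingDist u u' = 1 ∧ hammingDist u' w = (z : ℕ)).card : ℝ)
        * (1 / ((d : ℝ) * ((n : ℝ) - 1))) := by
    rw [show (univ.filter fun u' : V n d =>
          hammingDist u u' = 1 ∧ hammingDist u' w = (z : ℕ))
        = (sphere n d w z).filter (fun u' => hammingDist u u' = 1) from by
      ext u'
      simp only [mem_filter, mem_sphere n d, mem_univ, true_and]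
      tauto]
    simp only [Q]
    rw [← Finset.sum_filter]
    rw [Finset.sum_const, nsmul_eq_mul]
  rw [hsum, count_neighbors n d u w (z : ℕ)]
  simp only [BD.P, Matrix.of_apply, fwd_val, ← hx]
  have hn1 : (n : ℝ) - 1 ≠ 0 := by
    have : (3 : ℝ) ≤ (n : ℝ) := by exact_mod_cast hn
    linarith
  by_cases h1 : (z : ℕ) + 1 = x
  · rw [if_pos h1, if_pos h1]
    push_cast
    ring
  · rw [if_neg h1, if_neg h1]
    by_cases h2 : (z : ℕ) = x
    · rw [if_pos h2, if_pos h2]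
      push_cast [Nat.cast_sub (show 2 ≤ n by omega)]
      ring
    · rw [if_neg h2, if_neg h2]
      by_cases h3 : (z : ℕ) = x + 1
      · rw [if_pos h3, if_pos h3]
        have hd1 : (1 : ℕ) ≤ d := by omega
        have hdr : (d : ℝ) ≠ 0 := Nat.cast_ne_zero.mpr (by omega)
        push_cast [Nat.cast_sub hxd, Nat.cast_sub (show 1 ≤ n by omega)]
        field_simp
      · rw [if_neg h3, if_neg h3]
        simp

lemma rev_adj (hn : 3 ≤ n) (y z : Fin (d + 1)) (h : (z : ℕ) + 1 = (y : ℕ)) :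
    Nr n d y * BD.P n d y z = Nr n d z * BD.P n d z y := by
  have hzd : (z : ℕ) + 1 ≤ d := by omega
  have hn1 : (n : ℝ) - 1 ≠ 0 := by
    have : (3 : ℝ) ≤ (n : ℝ) := by exact_mod_cast hn
    linarith
  have hdr : (d : ℝ) ≠ 0 := Nat.cast_ne_zero.mpr (by omega)
  simp only [BD.P, Matrix.of_apply, Nr]
  rw [if_pos h, if_neg (by omega : ¬ ((y:ℕ) + 1 = (z:ℕ))),
    if_neg (by omega : ¬ ((y:ℕ) = (z:ℕ))), if_pos (by omega : (y:ℕ) = (z:ℕ) + 1)]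
  have hkey : (d.choose ((z:ℕ)+1) * ((z:ℕ)+1) : ℕ) = d.choose (z:ℕ) * (d - (z:ℕ)) :=
    Nat.choose_succ_right_eq d (z : ℕ)
  have hkeyR : (d.choose ((z:ℕ)+1) : ℝ) * ((z:ℕ)+1) = (d.choose (z:ℕ) : ℝ) * ((d:ℝ) - (z:ℕ)) := by
    have := congrArg (fun m : ℕ => (m : ℝ)) hkey
    push_cast [Nat.cast_sub (by omega : (z:ℕ) ≤ d)] at this
    linarith
  have hy : (y : ℕ) = (z : ℕ) + 1 := h.symm
  rw [hy]
  push_cast [Nat.cast_sub (by omega : 1 ≤ n)]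
  field_simp
  linear_combination ((n:ℝ)-1)^(z:ℕ) * ((n:ℝ)-1) * hkeyR

lemma rev (hn : 3 ≤ n) (hd : 2 ≤ d) (y z : Fin (d + 1)) :
    Nr n d y * BD.P n d y z = Nr n d z * BD.P n d z y := by
  by_cases h1 : (z : ℕ) + 1 = (y : ℕ)
  · exact rev_adj n d hn y z h1
  · by_cases h2 : (z : ℕ) = (y : ℕ)
    · have : z = y := Fin.ext h2
      rw [this]
    · by_cases h3 : (y : ℕ) + 1 = (z : ℕ)
      · exact (rev_adj n d hn z y h3).symm
      · simp only [BD.P, Matrix.of_apply]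
        rw [if_neg h1, if_neg h2, if_neg (by omega), if_neg h3,
          if_neg (by omega), if_neg (by omega)]
        simp

lemma Nr_pos (hn : 3 ≤ n) (z : Fin (d + 1)) : 0 < Nr n d z := by
  have h1 : 0 < d.choose (z : ℕ) :=
    Nat.choose_pos (by omega : (z : ℕ) ≤ d)
  have h2 : 0 < (n - 1) ^ (z : ℕ) := Nat.pow_pos (by omega)
  have : 0 < d.choose (z : ℕ) * (n - 1) ^ (z : ℕ) := Nat.mul_pos h1 h2
  unfold Nr; exact_mod_cast this

lemma lump (hn : 3 ≤ n) (w : V n d) (t : ℕ) (u : V n d) (z : Fin (d + 1)) :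
    ∑ u' ∈ sphere n d w z, (Q n d ^ t) u u' = (BD.P n d ^ t) (fwd n d w u) z := by
  classical
  induction t generalizing z with
  | zero =>
    simp only [pow_zero, Matrix.one_apply]
    rw [Finset.sum_ite_eq]
    by_cases hu : u ∈ sphere n d w z
    · rw [if_pos hu]
      have : fwd n d w u = z := (mem_filter.mp hu).2
      rw [if_pos this]
    · rw [if_neg hu]
      have : ¬ fwd n d w u = z := fun hc => hu (mem_filter.mpr ⟨mem_univ _, hc⟩)
      rw [if_neg this]
  | succ t ih =>
    simp only [pow_succ, Matrix.mul_apply]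
    rw [Finset.sum_comm]
    rw [Finset.sum_congr rfl fun m (_ : m ∈ univ) => by
      rw [← Finset.mul_sum, step n d hn m w z]]
    rw [← Finset.sum_fiberwise univ (fun m => fwd n d w m)
      (fun m => (Q n d ^ t) u m * BD.P n d (fwd n d w m) z)]
    refine Finset.sum_congr rfl fun y _ => ?_
    rw [Finset.sum_congr rfl (fun m hm => by rw [(mem_filter.mp hm).2])]
    rw [← Finset.sum_mul]
    congr 1
    exact ih y

lemma start (hn : 3 ≤ n) (hd : 2 ≤ d) (v : V n d) (t : ℕ) (u' : V n d) :
    (Q n d ^ t) v u' = (BD.P n d ^ t) 0 (fwd n d v u') / Nr n d (fwd n d v u') := by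
  classical
  induction t generalizing u' with
  | zero =>
    simp only [pow_zero, Matrix.one_apply]
    by_cases h : v = u'
    · subst h
      rw [if_pos rfl]
      have h0 : fwd n d v v = 0 := Fin.ext (by simp [fwd, hammingDist_self])
      rw [h0, if_pos rfl, Nr]
      norm_num
    · rw [if_neg h]
      have h0 : ¬ (0 : Fin (d+1)) = fwd n d v u' := by
        intro hc
        have : hammingDist u' v = 0 := by
          have := congrArg (fun a : Fin (d+1) => (a : ℕ)) hc
          simpa [fwd] using this.symm
        exact h (eq_of_hammingDist_eq_zero this).symm
      rw [if_neg h0, zero_div]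
  | succ t ih =>
    simp only [pow_succ, Matrix.mul_apply]
    rw [Finset.sum_congr rfl fun m (_ : m ∈ univ) => by rw [ih m]]
    rw [← Finset.sum_fiberwise univ (fun m => fwd n d v m)
      (fun m => (BD.P n d ^ t) 0 (fwd n d v m) / Nr n d (fwd n d v m) * Q n d m u')]
    have hstep : ∀ y : Fin (d+1),
        (∑ m ∈ univ.filter (fun m => fwd n d v m = y),
          (BD.P n d ^ t) 0 (fwd n d v m) / Nr n d (fwd n d v m) * Q n d m u')
        = (BD.P n d ^ t) 0 y / Nr n d y * BD.P n d (fwd n d v u') y := by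
      intro y
      rw [Finset.sum_congr rfl (fun m hm => by
        rw [(mem_filter.mp hm).2, Q_symm n d m u'])]
      rw [← Finset.mul_sum]
      congr 1
      exact step n d hn u' v y
    rw [Finset.sum_congr rfl fun y _ => hstep y]
    have hkey : ∀ y : Fin (d+1),
        (BD.P n d ^ t) 0 y / Nr n d y * BD.P n d (fwd n d v u') y
        = (BD.P n d ^ t) 0 y * BD.P n d y (fwd n d v u') / Nr n d (fwd n d v u') := by
      intro y
      have hrev := rev n d hn hd (fwd n d v u') y
      have h1 := Nr_pos n d hn y
      have h2 := Nr_pos n d hn (fwd n d v u')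
      field_simp
      linear_combination (BD.P n d ^ t) 0 y * hrev
    rw [Finset.sum_congr rfl fun y _ => hkey y]
    rw [← Finset.sum_div, ← Matrix.mul_apply]

end RWBD

namespace RWBD

lemma pi_eq_card (n d : ℕ) (hn : 3 ≤ n) (w' : V n d) (z : Fin (d + 1)) :
    BD.pi n d z = ((sphere n d w' z).card : ℝ) / (n : ℝ) ^ d := by
  rw [card_sphere, BD.pi]
  push_cast [Nat.cast_sub (show 1 ≤ n by omega)]
  ring

lemma key_ineq (n d : ℕ) (hn : 3 ≤ n) (hd : 2 ≤ d) (t : ℕ) (x : Fin (d + 1)) :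
    tv ((BD.P n d ^ t) x) (BD.pi n d) ≤ tv ((BD.P n d ^ t) 0) (BD.pi n d) := by
  classical
  set v : V n d := fun _ => ⟨0, by omega⟩ with hv
  set w : V n d := fun i => if (i : ℕ) < (x : ℕ) then ⟨1, by omega⟩ else ⟨0, by omega⟩ with hw
  have hcard : (univ.filter fun i : Fin d => (i : ℕ) < (x : ℕ)).card = (x : ℕ) := by
    rcases Nat.lt_or_ge (x : ℕ) d with hlt | hge
    · have : (univ.filter fun i : Fin d => (i : ℕ) < (x : ℕ)) = Finset.Iio ⟨(x : ℕ), hlt⟩ := by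
        ext i
        simp [Finset.mem_Iio, Fin.lt_def]
      rw [this, Fin.card_Iio]
    · have hxd : (x : ℕ) = d := le_antisymm (by omega) hge
      have : (univ.filter fun i : Fin d => (i : ℕ) < (x : ℕ)) = univ := by
        ext i
        simp only [mem_filter, mem_univ, true_and, iff_true]
        omega
      rw [this, card_univ, Fintype.card_fin, hxd]
  have hvw : hammingDist v w = (x : ℕ) := by
    rw [hammingDist]
    rw [show ({i | v i ≠ w i} : Finset (Fin d))
        = univ.filter (fun i : Fin d => (i : ℕ) < (x : ℕ)) from by
      ext i
      simp only [mem_filter, mem_univ, true_and, Finset.mem_filter]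
      by_cases hi : (i : ℕ) < (x : ℕ)
      · simp [hv, hw, hi, Fin.ext_iff]
      · simp [hv, hw, hi, Fin.ext_iff]]
    exact hcard
  have hfwd : fwd n d w v = x := Fin.ext (by simpa [fwd] using hvw)
  set g : V n d → ℝ := fun u' => |(Q n d ^ t) v u' - 1 / (n : ℝ) ^ d| with hg
  -- the x side is at most (∑ g)/2
  have hxle : tv ((BD.P n d ^ t) x) (BD.pi n d) ≤ (∑ u', g u') / 2 := by
    rw [tv]
    apply div_le_div_of_nonneg_right _ (by norm_num)
    · rw [← Finset.sum_fiberwise univ (fun u' => fwd n d w u') g]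
      apply Finset.sum_le_sum
      intro z _
      have h1 : (BD.P n d ^ t) x z = ∑ u' ∈ sphere n d w z, (Q n d ^ t) v u' := by
        rw [lump n d hn w t v z, hfwd]
      have h2 : BD.pi n d z = ∑ u' ∈ sphere n d w z, 1 / (n : ℝ) ^ d := by
        rw [Finset.sum_const, pi_eq_card n d hn w z, nsmul_eq_mul]
        ring
      rw [h1, h2, ← Finset.sum_sub_distrib]
      exact (Finset.abs_sum_le_sum_abs _ _).trans (le_of_eq rfl)
  -- the 0 side equals (∑ g)/2
  have h0eq : tv ((BD.P n d ^ t) 0) (BD.pi n d) = (∑ u', g u') / 2 := by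
    rw [tv]
    congr 1
    rw [← Finset.sum_fiberwise univ (fun u' => fwd n d v u') g]
    refine Finset.sum_congr rfl fun z _ => ?_
    have hNz : Nr n d z ≠ 0 := ne_of_gt (Nr_pos n d hn z)
    have hcast : ((sphere n d v z).card : ℝ) = Nr n d z := by
      rw [card_sphere, Nr]
    have hconst : ∀ u' ∈ sphere n d v z,
        g u' = |(BD.P n d ^ t) 0 z / Nr n d z - 1 / (n : ℝ) ^ d| := by
      intro u' hu'
      have hz : fwd n d v u' = z := (mem_filter.mp hu').2
      rw [hg]
      simp only
      rw [start n d hn hd v t u', hz]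
    have hsph : ∑ u' ∈ sphere n d v z, g u' = |(BD.P n d ^ t) 0 z - BD.pi n d z| := by
      have hlin : Nr n d z * ((BD.P n d ^ t) 0 z / Nr n d z - 1 / (n : ℝ) ^ d)
          = (BD.P n d ^ t) 0 z - BD.pi n d z := by
        rw [mul_sub, mul_div_cancel₀ _ hNz, pi_eq_card n d hn v z, hcast]
        ring
      rw [Finset.sum_congr rfl hconst, Finset.sum_const, nsmul_eq_mul, hcast,
        ← hlin, abs_mul, abs_of_pos (Nr_pos n d hn z)]
    exact hsph.symm
  rw [h0eq]
  exact hxle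

end RWBD

open RWBD in
theorem rwbd_worst_case_at_zero (n d : ℕ) (hn : 3 ≤ n) (hd : 2 ≤ d) (t : ℕ) :
    (⨆ x : Fin (d + 1), tv ((BD.P n d ^ t) x) (BD.pi n d)) =
      tv ((BD.P n d ^ t) 0) (BD.pi n d) := by
  refine le_antisymm (ciSup_le fun x => key_ineq n d hn hd t x) ?_
  exact le_ciSup (f := fun x : Fin (d + 1) => tv ((BD.P n d ^ t) x) (BD.pi n d))
    (Set.Finite.bddAbove (Set.finite_range _)) 0
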